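/- In SA_forever on a violator space (H, V) with |H| = n and dimension d, sampling r elements per round, the expected total multiplicity after ℓ rounds satisfies E[μ^(ℓ)(H)] ≤ n(1 + d/r)^ℓ. -/

import Mathlib

open Finset

/-- A violator space: a finite set `H` together with a violator mapping `V : 2^H → 2^H`
satisfying consistency and locality. -/
structure ViolatorSpace (H : Type*) [Fintype H] [DecidableEq H] where
  V : Finset H → Finset H
  consistency : ∀ G : Finset H, Disjoint G (V G)
  locality : ∀ F G : Finset H, F ⊆ G → Disjoint G (V F) → V G = V F

/-- `B` is a basis of `G` for the mapping `W`: a minimal subset of `G` with the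
same violators as `G`. -/
def IsBasisOf {H : Type*} [Fintype H] [DecidableEq H]
    (W : Finset H → Finset H) (B G : Finset H) : Prop :=
  B ⊆ G ∧ W B = W G ∧ ∀ B' : Finset H, B' ⊂ B → W B' ≠ W G

/-- The working sets of the German Algorithm started from `R`:
`G⁽⁰⁾ = R` and `G⁽ⁱ⁺¹⁾ = G⁽ⁱ⁾ ∪ V(G⁽ⁱ⁾)`.  (Round `i ≥ 1` of the algorithm
computes a basis of `G⁽ⁱ⁻¹⁾`, whose violator set is `V⁽ⁱ⁾ = V(G⁽ⁱ⁻¹⁾)`;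
once the violator set is empty the sequence stabilizes, matching the
convention that sets of later rounds equal those of the final round.) -/
def Gseq {H : Type*} [Fintype H] [DecidableEq H]
    (VS : ViolatorSpace H) (R : Finset H) : ℕ → Finset H
  | 0 => R
  | (i + 1) => Gseq VS R i ∪ VS.V (Gseq VS R i)

/-- The uniform distribution on the `r`-element subsets of `s` (with a junk
value when no such subset exists, which never occurs along the algorithm). -/
noncomputable def sampleDist {β : Type*} [DecidableEq β] (s : Finset β) (r : ℕ) :
    PMF (Finset β) :=
  if h : (s.powersetCard r).Nonempty then PMF.uniformOfFinset _ h else PMF.pure ∅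

/-- The multiset `Ĥ` induced by the multiplicities `μ`: it contains the `μ h`
copies `(h, 0), …, (h, μ h - 1)` of each element `h ∈ H`. -/
def hatH {H : Type*} [Fintype H] [DecidableEq H] (μ : H → ℕ) : Finset (H × ℕ) :=
  univ.biUnion (fun h => (Finset.range (μ h)).image (fun j => (h, j)))

/-- `SA_forever`, the Swiss Algorithm run forever: `proc VS r ℓ` is the joint
distribution, after `ℓ` rounds, of the multiplicity vector `μ⁽ˡ⁾` and of the
indicator of the event `C_ℓ` that the first `ℓ` rounds were all controversial.
Each round draws a uniformly random `r`-element subset of the multiset `Ĥ`,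
collapses it to a set `R ⊆ H`, and doubles the multiplicity of every violator
of (a basis of) `R`; the round is controversial if `V(R) ≠ ∅`. -/
noncomputable def proc {H : Type*} [Fintype H] [DecidableEq H]
    (VS : ViolatorSpace H) (r : ℕ) : ℕ → PMF ((H → ℕ) × Bool)
  | 0 => PMF.pure (fun _ => 1, true)
  | (ℓ + 1) => (proc VS r ℓ).bind fun p =>
      (sampleDist (hatH p.1) r).map fun Rhat =>
        (fun h => if h ∈ VS.V (Rhat.image Prod.fst) then 2 * p.1 h else p.1 h,
         p.2 && decide (VS.V (Rhat.image Prod.fst) ≠ ∅))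

open scoped ENNReal

section Aux
variable {H : Type*} [Fintype H] [DecidableEq H]

lemma filter_hatH_card (μ : H → ℕ) (A : Finset H) :
    ((hatH μ).filter (fun x => x.1 ∈ A)).card = ∑ h ∈ A, μ h := by
  classical
  have hset : (hatH μ).filter (fun x => x.1 ∈ A)
      = A.biUnion (fun h => (Finset.range (μ h)).image (fun j => (h, j))) := by
    ext x
    simp only [hatH, Finset.mem_filter, Finset.mem_biUnion, Finset.mem_univ, true_and,
      Finset.mem_image, Finset.mem_range]
    constructor
    · rintro ⟨⟨h, j, hj, rfl⟩, hA⟩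
      exact ⟨h, hA, j, hj, rfl⟩
    · rintro ⟨h, hA, j, hj, rfl⟩
      exact ⟨⟨h, j, hj, rfl⟩, hA⟩
  rw [hset, Finset.card_biUnion]
  · refine Finset.sum_congr rfl fun h _ => ?_
    rw [Finset.card_image_of_injective _ (fun a b hab => by simpa using hab), Finset.card_range]
  · intro a _ b _ hab
    simp only [Finset.disjoint_left, Finset.mem_image, Finset.mem_range]
    rintro x ⟨j, _, rfl⟩ ⟨k, _, hk⟩
    exact hab (congrArg Prod.fst hk).symm

lemma card_hatH (μ : H → ℕ) : (hatH μ).card = ∑ h, μ h := by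
  have := filter_hatH_card μ univ
  simpa using this

lemma exists_basis (VS : ViolatorSpace H) (G : Finset H) : ∃ B, IsBasisOf VS.V B G := by
  classical
  obtain ⟨B, hB, hmin⟩ := Finset.exists_min_image
    (G.powerset.filter (fun B => VS.V B = VS.V G)) Finset.card
    ⟨G, by simp⟩
  simp only [Finset.mem_filter, Finset.mem_powerset] at hB
  refine ⟨B, hB.1, hB.2, fun B' hB' hVB' => ?_⟩
  have hmem : B' ∈ G.powerset.filter (fun B => VS.V B = VS.V G) := by
    simp only [Finset.mem_filter, Finset.mem_powerset]
    exact ⟨hB'.subset.trans hB.1, hVB'⟩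
  exact absurd (hmin B' hmem) (not_le.mpr (Finset.card_lt_card hB'))

lemma mem_basis_of_violates (VS : ViolatorSpace H) {G B : Finset H} {h : H}
    (hB : IsBasisOf VS.V B G) (hG : h ∈ G) (hv : h ∈ VS.V (G.erase h)) : h ∈ B := by
  by_contra hnB
  have hBsub : B ⊆ G.erase h :=
    fun x hx => Finset.mem_erase.mpr ⟨fun e => hnB (e ▸ hx), hB.1 hx⟩
  have hdisj : Disjoint (G.erase h) (VS.V B) := by
    rw [hB.2.1]
    exact (VS.consistency G).mono_left (Finset.erase_subset _ _)
  have hloc := VS.locality B (G.erase h) hBsub hdisj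
  rw [hloc, hB.2.1] at hv
  exact Finset.disjoint_left.mp (VS.consistency G) hG hv

lemma V_eq_empty_of_d0 (VS : ViolatorSpace H)
    (hd : ∀ G B : Finset H, IsBasisOf VS.V B G → B.card ≤ 0) (G : Finset H) :
    VS.V G = ∅ := by
  have hb : ∀ G' : Finset H, VS.V G' = VS.V ∅ := by
    intro G'
    obtain ⟨B, hB⟩ := exists_basis VS G'
    have hB0 : B = ∅ := Finset.card_eq_zero.mp (Nat.le_zero.mp (hd _ _ hB))
    rw [← hB.2.1, hB0]
  have hu : VS.V univ = ∅ :=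
    Finset.eq_empty_iff_forall_notMem.mpr
      (fun x hx => Finset.disjoint_left.mp (VS.consistency univ) (Finset.mem_univ x) hx)
  rw [hb G, ← hb univ, hu]

lemma extreme_card_le (VS : ViolatorSpace H) {d : ℕ}
    (hd : ∀ G B : Finset H, IsBasisOf VS.V B G → B.card ≤ d) (Q : Finset (H × ℕ)) :
    (Q.filter (fun x => x.1 ∈ VS.V ((Q.erase x).image Prod.fst))).card ≤ d := by
  classical
  obtain ⟨B, hB⟩ := exists_basis VS (Q.image Prod.fst)
  set X := Q.filter (fun x => x.1 ∈ VS.V ((Q.erase x).image Prod.fst)) with hXdef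
  have huniq : ∀ x ∈ X, ∀ y ∈ Q, y.1 = x.1 → y = x := by
    intro x hx y hy hxy
    by_contra hne
    rw [hXdef, Finset.mem_filter] at hx
    have hy' : y ∈ Q.erase x := Finset.mem_erase.mpr ⟨hne, hy⟩
    have hmem : x.1 ∈ (Q.erase x).image Prod.fst := Finset.mem_image.mpr ⟨y, hy', hxy⟩
    exact Finset.disjoint_left.mp (VS.consistency _) hmem hx.2
  have himg : ∀ x ∈ X, x.1 ∈ B := by
    intro x hx
    have hxQ : x ∈ Q := (Finset.mem_filter.mp hx).1
    have hxv := (Finset.mem_filter.mp hx).2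
    have heq : (Q.erase x).image Prod.fst = (Q.image Prod.fst).erase x.1 := by
      ext g
      simp only [Finset.mem_image, Finset.mem_erase]
      constructor
      · rintro ⟨y, ⟨hne', hy⟩, rfl⟩
        exact ⟨fun e => hne' (huniq x hx y hy e), ⟨y, hy, rfl⟩⟩
      · rintro ⟨hne, y, hy, rfl⟩
        exact ⟨y, ⟨fun e => hne (by rw [e]), hy⟩, rfl⟩
    rw [heq] at hxv
    exact mem_basis_of_violates VS hB (Finset.mem_image_of_mem _ hxQ) hxv
  have hinj : Set.InjOn Prod.fst (X : Set (H × ℕ)) := by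
    intro x hx y hy e
    exact (huniq x hx y (Finset.mem_filter.mp hy).1 e.symm).symm
  calc X.card = (X.image Prod.fst).card := (Finset.card_image_of_injOn hinj).symm
    _ ≤ B.card := Finset.card_le_card (fun g hg => by
        obtain ⟨x, hx, rfl⟩ := Finset.mem_image.mp hg; exact himg x hx)
    _ ≤ d := hd _ _ hB

lemma double_count (VS : ViolatorSpace H) (S : Finset (H × ℕ)) (r : ℕ) :
    ∑ R ∈ S.powersetCard r,
        ((S \ R).filter (fun x => x.1 ∈ VS.V (R.image Prod.fst))).card
  = ∑ Q ∈ S.powersetCard (r + 1),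
        (Q.filter (fun x => x.1 ∈ VS.V ((Q.erase x).image Prod.fst))).card := by
  classical
  simp only [Finset.card_filter]
  rw [Finset.sum_sigma' (S.powersetCard r) (fun R => S \ R)
      (fun R x => if x.1 ∈ VS.V (R.image Prod.fst) then 1 else 0),
    Finset.sum_sigma' (S.powersetCard (r+1)) (fun Q => Q)
      (fun Q x => if x.1 ∈ VS.V ((Q.erase x).image Prod.fst) then 1 else 0)]
  refine Finset.sum_nbij' (fun p => ⟨insert p.2 p.1, p.2⟩) (fun q => ⟨q.1.erase q.2, q.2⟩)
    ?_ ?_ ?_ ?_ ?_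
  · rintro ⟨R, x⟩ hp
    rw [Finset.mem_sigma] at hp
    obtain ⟨hR, hx⟩ := hp
    rw [Finset.mem_powersetCard] at hR
    rw [Finset.mem_sdiff] at hx
    rw [Finset.mem_sigma, Finset.mem_powersetCard]
    refine ⟨⟨Finset.insert_subset hx.1 hR.1, ?_⟩, Finset.mem_insert_self _ _⟩
    rw [Finset.card_insert_of_notMem hx.2, hR.2]
  · rintro ⟨Q, x⟩ hq
    rw [Finset.mem_sigma] at hq
    obtain ⟨hQ, hx⟩ := hq
    rw [Finset.mem_powersetCard] at hQ
    rw [Finset.mem_sigma, Finset.mem_powersetCard, Finset.mem_sdiff]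
    refine ⟨⟨(Finset.erase_subset _ _).trans hQ.1, ?_⟩, hQ.1 hx, Finset.notMem_erase _ _⟩
    rw [Finset.card_erase_of_mem hx, hQ.2]
    omega
  · rintro ⟨R, x⟩ hp
    rw [Finset.mem_sigma, Finset.mem_sdiff] at hp
    simp only [Finset.erase_insert hp.2.2]
  · rintro ⟨Q, x⟩ hq
    rw [Finset.mem_sigma] at hq
    simp only [Finset.insert_erase hq.2]
  · rintro ⟨R, x⟩ hp
    rw [Finset.mem_sigma, Finset.mem_sdiff] at hp
    simp only [Finset.erase_insert hp.2.2]

lemma count_key (VS : ViolatorSpace H) {d : ℕ}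
    (hd : ∀ G B : Finset H, IsBasisOf VS.V B G → B.card ≤ d) (μ : H → ℕ) (r : ℕ) :
    (∑ R ∈ (hatH μ).powersetCard r, ∑ h ∈ VS.V (R.image Prod.fst), μ h) * r
      ≤ d * (∑ h, μ h) * ((∑ h, μ h).choose r) := by
  classical
  set S := hatH μ with hS
  set t := ∑ h, μ h with ht
  have hW : ∀ R ∈ S.powersetCard r,
      ∑ h ∈ VS.V (R.image Prod.fst), μ h
        = ((S \ R).filter (fun x => x.1 ∈ VS.V (R.image Prod.fst))).card := by
    intro R hR
    have hRS : R ⊆ S := (Finset.mem_powersetCard.mp hR).1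
    rw [← filter_hatH_card μ (VS.V (R.image Prod.fst)), ← hS]
    congr 1
    ext x
    simp only [Finset.mem_filter, Finset.mem_sdiff]
    constructor
    · rintro ⟨hxS, hxv⟩
      exact ⟨⟨hxS, fun hxR => Finset.disjoint_left.mp (VS.consistency _)
        (Finset.mem_image_of_mem _ hxR) hxv⟩, hxv⟩
    · rintro ⟨⟨hxS, _⟩, hxv⟩
      exact ⟨hxS, hxv⟩
  have h1 : ∑ R ∈ S.powersetCard r, ∑ h ∈ VS.V (R.image Prod.fst), μ h
      = ∑ Q ∈ S.powersetCard (r + 1),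
          (Q.filter (fun x => x.1 ∈ VS.V ((Q.erase x).image Prod.fst))).card := by
    rw [Finset.sum_congr rfl hW, double_count]
  have h2 : ∑ Q ∈ S.powersetCard (r + 1),
      (Q.filter (fun x => x.1 ∈ VS.V ((Q.erase x).image Prod.fst))).card
      ≤ t.choose (r + 1) * d := by
    calc _ ≤ ∑ _Q ∈ S.powersetCard (r + 1), d :=
          Finset.sum_le_sum (fun Q _ => extreme_card_le VS hd Q)
      _ = t.choose (r + 1) * d := by
          rw [Finset.sum_const, Finset.card_powersetCard, smul_eq_mul, hS, card_hatH]
  calc (∑ R ∈ S.powersetCard r, ∑ h ∈ VS.V (R.image Prod.fst), μ h) * r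
      ≤ (t.choose (r + 1) * d) * r := Nat.mul_le_mul_right r (h1 ▸ h2)
    _ = d * (t.choose (r + 1) * r) := by ring
    _ ≤ d * (t.choose (r + 1) * (r + 1)) :=
        Nat.mul_le_mul_left d (Nat.mul_le_mul_left _ (Nat.le_succ r))
    _ = d * (t.choose r * (t - r)) := by rw [Nat.choose_succ_right_eq]
    _ ≤ d * (t.choose r * t) :=
        Nat.mul_le_mul_left d (Nat.mul_le_mul_left _ (Nat.sub_le _ _))
    _ = d * t * t.choose r := by ring

end Aux

section Prob
variable {H : Type*} [Fintype H] [DecidableEq H]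

lemma tsum_pmf_bind {α β : Type*} (q : PMF α) (f : α → PMF β) (g : β → ℝ≥0∞) :
    ∑' b, (q.bind f) b * g b = ∑' a, q a * ∑' b, f a b * g b := by
  simp only [PMF.bind_apply]
  calc ∑' b, (∑' a, q a * f a b) * g b
      = ∑' b, ∑' a, q a * (f a b * g b) := by
        refine tsum_congr fun b => ?_
        rw [← ENNReal.tsum_mul_right]
        exact tsum_congr fun a => by ring
    _ = ∑' a, ∑' b, q a * (f a b * g b) := ENNReal.tsum_comm
    _ = ∑' a, q a * ∑' b, f a b * g b := by
        exact tsum_congr fun a => (ENNReal.tsum_mul_left).symm ▸ rfl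

lemma tsum_pmf_map {α β : Type*} (q : PMF α) (k : α → β) (g : β → ℝ≥0∞) :
    ∑' b, (q.map k) b * g b = ∑' a, q a * g (k a) := by
  rw [PMF.map, tsum_pmf_bind]
  refine tsum_congr fun a => ?_
  congr 1
  rw [tsum_eq_single (k a) (fun b hb => by simp [PMF.pure_apply, hb])]
  simp [PMF.pure_apply]

lemma step_bound (VS : ViolatorSpace H) {d r n : ℕ} (hn : Fintype.card H = n) (hr : r ≤ n)
    (hd : ∀ G B : Finset H, IsBasisOf VS.V B G → B.card ≤ d)
    (μ : H → ℕ) (hμ : ∀ h, 1 ≤ μ h) :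
    (∑' Rhat : Finset (H × ℕ), sampleDist (hatH μ) r Rhat *
        (∑ h : H, ((if h ∈ VS.V (Rhat.image Prod.fst) then 2 * μ h else μ h : ℕ) : ℝ≥0∞)))
      ≤ (1 + (d : ℝ≥0∞) / r) * ∑ h : H, (μ h : ℝ≥0∞) := by
  classical
  rcases Nat.eq_zero_or_pos r with hr0 | hrpos
  · subst hr0
    by_cases hd0 : d = 0
    · subst hd0
      have hV : ∀ G : Finset H, VS.V G = ∅ := V_eq_empty_of_d0 VS hd
      simp only [hV, Finset.notMem_empty, if_false]
      rw [ENNReal.tsum_mul_right, PMF.tsum_coe, one_mul]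
      simp
    · by_cases hT : (∑ h : H, (μ h : ℝ≥0∞)) = 0
      · haveI : IsEmpty H := by
          refine ⟨fun h => ?_⟩
          have h0 : μ h = 0 := by
            exact_mod_cast Finset.sum_eq_zero_iff.mp hT h (Finset.mem_univ h)
          have h1 := hμ h
          omega
        simp
      · have htop : (1 + (d : ℝ≥0∞) / ((0 : ℕ) : ℝ≥0∞)) * ∑ h : H, (μ h : ℝ≥0∞) = ⊤ := by
          rw [Nat.cast_zero, ENNReal.div_zero (by exact_mod_cast hd0)]
          simp [ENNReal.top_mul hT]
        rw [htop]
        exact le_top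
  · -- main case r ≥ 1
    set S := hatH μ with hSdef
    set t := ∑ h, μ h with htdef
    have hcard : S.card = t := card_hatH μ
    have hnt : n ≤ t := by
      calc n = Fintype.card H := hn.symm
        _ = ∑ _h : H, 1 := by rw [Finset.sum_const, Finset.card_univ, smul_eq_mul, mul_one]
        _ ≤ t := Finset.sum_le_sum fun h _ => hμ h
    have htr : r ≤ t := hr.trans hnt
    have hne : (S.powersetCard r).Nonempty := by
      rw [Finset.powersetCard_nonempty, hcard]; exact htr
    have hC0 : ((S.powersetCard r).card : ℝ≥0∞) ≠ 0 := by
      simp only [ne_eq, Nat.cast_eq_zero, Finset.card_eq_zero]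
      exact hne.ne_empty
    have hCt : ((S.powersetCard r).card : ℝ≥0∞) ≠ ⊤ := ENNReal.natCast_ne_top _
    rw [sampleDist, dif_pos hne]
    set C := (S.powersetCard r).card with hCdef
    have hts : (∑' Rhat : Finset (H × ℕ), PMF.uniformOfFinset _ hne Rhat *
        (∑ h : H, ((if h ∈ VS.V (Rhat.image Prod.fst) then 2 * μ h else μ h : ℕ) : ℝ≥0∞)))
        = ∑ Rhat ∈ S.powersetCard r, (C : ℝ≥0∞)⁻¹ *
            (∑ h : H, ((if h ∈ VS.V (Rhat.image Prod.fst) then 2 * μ h else μ h : ℕ) : ℝ≥0∞)) := by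
      rw [tsum_eq_sum (s := S.powersetCard r)
        (fun R hR => by rw [PMF.uniformOfFinset_apply, if_neg hR, zero_mul])]
      exact Finset.sum_congr rfl fun R hR => by rw [PMF.uniformOfFinset_apply, if_pos hR]
    rw [hts]
    have hinner : ∀ R : Finset (H × ℕ),
        (∑ h : H, ((if h ∈ VS.V (R.image Prod.fst) then 2 * μ h else μ h : ℕ) : ℝ≥0∞))
        = (t : ℝ≥0∞) + ((∑ h ∈ VS.V (R.image Prod.fst), μ h : ℕ) : ℝ≥0∞) := by
      intro R
      have e1 : ∀ h : H, ((if h ∈ VS.V (R.image Prod.fst) then 2 * μ h else μ h : ℕ) : ℝ≥0∞)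
          = (μ h : ℝ≥0∞) + (if h ∈ VS.V (R.image Prod.fst) then (μ h : ℝ≥0∞) else 0) := by
        intro h; split_ifs <;> push_cast <;> ring
      rw [Finset.sum_congr rfl (fun h _ => e1 h), Finset.sum_add_distrib]
      congr 1
      · rw [htdef]; push_cast; rfl
      · rw [← Finset.sum_filter]
        push_cast
        refine Finset.sum_congr ?_ (fun _ _ => rfl)
        ext h; simp
    simp only [hinner]
    have hTcast : (∑ h : H, (μ h : ℝ≥0∞)) = (t : ℝ≥0∞) := by
      rw [htdef]; push_cast; rfl
    rw [hTcast]
    set W : ℝ≥0∞ := ∑ R ∈ S.powersetCard r,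
        ((∑ h ∈ VS.V (R.image Prod.fst), μ h : ℕ) : ℝ≥0∞) with hWdef
    have hCchoose : C = t.choose r := by rw [hCdef, Finset.card_powersetCard, hcard]
    have hWr : W * r ≤ (d : ℝ≥0∞) * t * C := by
      have hk := count_key VS hd μ r
      rw [← htdef, ← hSdef, ← hCchoose] at hk
      calc W * r = (((∑ R ∈ S.powersetCard r, ∑ h ∈ VS.V (R.image Prod.fst), μ h) * r : ℕ) : ℝ≥0∞) := by
            rw [hWdef]; push_cast; ring
        _ ≤ (((d * t * C : ℕ)) : ℝ≥0∞) := Nat.cast_le.mpr hk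
        _ = (d : ℝ≥0∞) * t * C := by push_cast; ring
    have hr0' : ((r : ℕ) : ℝ≥0∞) ≠ 0 := by exact_mod_cast hrpos.ne'
    have hW2 : W ≤ (d : ℝ≥0∞) * t * C / r :=
      (ENNReal.le_div_iff_mul_le (Or.inl hr0') (Or.inl (ENNReal.natCast_ne_top r))).mpr hWr
    calc ∑ R ∈ S.powersetCard r, (C : ℝ≥0∞)⁻¹ *
            ((t : ℝ≥0∞) + ((∑ h ∈ VS.V (R.image Prod.fst), μ h : ℕ) : ℝ≥0∞))
        = (C : ℝ≥0∞)⁻¹ * ((C : ℝ≥0∞) * t + W) := by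
          rw [← Finset.mul_sum, Finset.sum_add_distrib, Finset.sum_const, ← hCdef,
            nsmul_eq_mul, hWdef]
      _ = ((C : ℝ≥0∞)⁻¹ * C) * t + (C : ℝ≥0∞)⁻¹ * W := by ring
      _ = (t : ℝ≥0∞) + (C : ℝ≥0∞)⁻¹ * W := by
          rw [ENNReal.inv_mul_cancel hC0 hCt, one_mul]
      _ ≤ (t : ℝ≥0∞) + (C : ℝ≥0∞)⁻¹ * ((d : ℝ≥0∞) * t * C / r) :=
          add_le_add_right (mul_le_mul_right hW2 _) _
      _ = (t : ℝ≥0∞) + ((C : ℝ≥0∞)⁻¹ * C) * ((d : ℝ≥0∞) * t / r) := by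
          rw [div_eq_mul_inv, div_eq_mul_inv]; ring
      _ = (t : ℝ≥0∞) + (d : ℝ≥0∞) * t / r := by
          rw [ENNReal.inv_mul_cancel hC0 hCt, one_mul]
      _ = (1 + (d : ℝ≥0∞) / r) * t := by
          rw [div_eq_mul_inv, div_eq_mul_inv]; ring
end Prob

section Main
variable {H : Type*} [Fintype H] [DecidableEq H]

lemma proc_one_le (VS : ViolatorSpace H) (r : ℕ) :
    ∀ ℓ : ℕ, ∀ p ∈ (proc VS r ℓ).support, ∀ h, 1 ≤ p.1 h := by
  intro ℓ
  induction ℓ with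
  | zero =>
    intro p hp h
    rw [proc, PMF.support_pure, Set.mem_singleton_iff] at hp
    subst hp
    exact le_refl 1
  | succ ℓ ih =>
    intro p hp h
    rw [proc, PMF.support_bind] at hp
    obtain ⟨q, hq, hp2⟩ := Set.mem_iUnion₂.mp hp
    rw [PMF.support_map] at hp2
    obtain ⟨Rhat, _, rfl⟩ := hp2
    have := ih q hq h
    simp only
    split_ifs <;> omega

end Main


/-- **Upper bound lemma.** In `SA_forever` on a violator space with `|H| = n`
and combinatorial dimension `d`, sampling `r ≤ n` elements per round, the
expected total multiplicity after `ℓ` rounds satisfies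
`E[μ⁽ˡ⁾(H)] ≤ n (1 + d/r)^ℓ`. -/
theorem swiss_upper_bound {H : Type*} [Fintype H] [DecidableEq H]
    (VS : ViolatorSpace H) (d r n : ℕ) (hn : Fintype.card H = n) (hr : r ≤ n)
    (hd : ∀ G B : Finset H, IsBasisOf VS.V B G → B.card ≤ d)
    (ℓ : ℕ) :
    (∑' x : (H → ℕ) × Bool,
        proc VS r ℓ x * (∑ h : H, (x.1 h : ℝ≥0∞)))
      ≤ (n : ℝ≥0∞) * (1 + (d : ℝ≥0∞) / (r : ℝ≥0∞)) ^ ℓ := by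
  induction ℓ with
  | zero =>
    rw [proc, pow_zero, mul_one]
    rw [tsum_eq_single ((fun _ => 1, true) : (H → ℕ) × Bool)
      (fun x hx => by rw [PMF.pure_apply, if_neg hx, zero_mul])]
    rw [PMF.pure_apply, if_pos rfl, one_mul]
    simp [hn.symm]
  | succ ℓ ih =>
    rw [proc, tsum_pmf_bind]
    have key : ∀ p : (H → ℕ) × Bool,
        proc VS r ℓ p * (∑' x, ((sampleDist (hatH p.1) r).map
          (fun Rhat => ((fun h => if h ∈ VS.V (Rhat.image Prod.fst) then 2 * p.1 h else p.1 h,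
            p.2 && decide (VS.V (Rhat.image Prod.fst) ≠ ∅)) : (H → ℕ) × Bool))) x *
            (∑ h : H, (x.1 h : ℝ≥0∞)))
        ≤ proc VS r ℓ p * ((1 + (d : ℝ≥0∞) / r) * ∑ h : H, (p.1 h : ℝ≥0∞)) := by
      intro p
      by_cases hp : proc VS r ℓ p = 0
      · rw [hp, zero_mul, zero_mul]
      · refine mul_le_mul_right ?_ _
        rw [tsum_pmf_map]
        have hμ : ∀ h, 1 ≤ p.1 h := proc_one_le VS r ℓ p (PMF.mem_support_iff _ p |>.mpr hp)
        have := step_bound VS hn hr hd p.1 hμ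
        simpa using this
    calc (∑' p : (H → ℕ) × Bool, proc VS r ℓ p * _)
        ≤ ∑' p : (H → ℕ) × Bool, proc VS r ℓ p *
            ((1 + (d : ℝ≥0∞) / r) * ∑ h : H, (p.1 h : ℝ≥0∞)) :=
          Summable.tsum_le_tsum key ENNReal.summable ENNReal.summable
      _ = (1 + (d : ℝ≥0∞) / r) * ∑' p : (H → ℕ) × Bool,
            proc VS r ℓ p * ∑ h : H, (p.1 h : ℝ≥0∞) := by
          rw [← ENNReal.tsum_mul_left]
          exact tsum_congr fun p => by ring
      _ ≤ (1 + (d : ℝ≥0∞) / r) * ((n : ℝ≥0∞) * (1 + (d : ℝ≥0∞) / r) ^ ℓ) :=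
          mul_le_mul_right ih _
      _ = (n : ℝ≥0∞) * (1 + (d : ℝ≥0∞) / r) ^ (ℓ + 1) := by ring
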